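/- Let X be a finite set, ν a probability measure on X with ν({x}) > 0 for all x, and R = [r_{xy}] a row-stochastic X × X matrix satisfying νR = ν (stationarity) and R² = R (idempotence). Then for all x, y ∈ X with r_{xy} > 0, the rows R_x and R_y are equal: r_{xz} = r_{yz} for all z ∈ X. -/
import Mathlib


/-- For a row-stochastic matrix `r` on a finite set that is stationary w.r.t. a strictly
positive probability vector `ν` and idempotent, `r x y > 0` implies that rows `x` and `y`
coincide. -/
theorem idempotent_stochastic_matrix_rows_eq {X : Type*} [Fintype X]
    (ν : X → ℝ) (hνpos : ∀ x, 0 < ν x) (hνsum : ∑ x, ν x = 1)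
    (r : X → X → ℝ) (hrnonneg : ∀ x y, 0 ≤ r x y) (hrrow : ∀ x, ∑ y, r x y = 1)
    (hstat : ∀ y, ∑ x, ν x * r x y = ν y)
    (hidem : ∀ x y, ∑ z, r x z * r z y = r x y) :
    ∀ x y, 0 < r x y → ∀ z, r x z = r y z := by
  intro x y hxy z
  set g : X → ℝ := fun w => r w z with hg
  have hharm : ∀ w, ∑ u, r w u * g u = g w := fun w => hidem w z
  have hA : ∑ a, ∑ b, ν a * r a b * g b ^ 2 = ∑ b, ν b * g b ^ 2 := by
    rw [Finset.sum_comm]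
    refine Finset.sum_congr rfl fun b _ => ?_
    rw [← hstat b, Finset.sum_mul]
  have hB : ∑ a, ∑ b, ν a * g a * (r a b * g b) = ∑ a, ν a * g a ^ 2 := by
    refine Finset.sum_congr rfl fun a _ => ?_
    rw [← Finset.mul_sum, hharm a]; ring
  have hC : ∑ a, ∑ b, ν a * g a ^ 2 * r a b = ∑ a, ν a * g a ^ 2 := by
    refine Finset.sum_congr rfl fun a _ => ?_
    rw [← Finset.mul_sum, hrrow a, mul_one]
  have hS : ∑ a, ∑ b, ν a * r a b * (g b - g a) ^ 2 = 0 := by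
    have step : ∀ a : X, ∑ b, ν a * r a b * (g b - g a) ^ 2
        = (∑ b, ν a * r a b * g b ^ 2) - 2 * (∑ b, ν a * g a * (r a b * g b))
          + ∑ b, ν a * g a ^ 2 * r a b := by
      intro a
      rw [Finset.mul_sum, ← Finset.sum_sub_distrib, ← Finset.sum_add_distrib]
      exact Finset.sum_congr rfl fun b _ => by ring
    simp_rw [step]
    rw [Finset.sum_add_distrib, Finset.sum_sub_distrib, ← Finset.mul_sum, hA, hB, hC]
    ring
  have hnn : ∀ a b : X, 0 ≤ ν a * r a b * (g b - g a) ^ 2 := fun a b =>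
    mul_nonneg (mul_nonneg (hνpos a).le (hrnonneg a b)) (sq_nonneg _)
  have hterm : ν x * r x y * (g y - g x) ^ 2 = 0 := by
    have h1 := (Finset.sum_eq_zero_iff_of_nonneg
      (fun a _ => Finset.sum_nonneg fun b _ => hnn a b)).mp hS x (Finset.mem_univ x)
    exact (Finset.sum_eq_zero_iff_of_nonneg (fun b _ => hnn x b)).mp h1 y (Finset.mem_univ y)
  have hsq : (g y - g x) ^ 2 = 0 := by
    rcases mul_eq_zero.mp hterm with h | h
    · rcases mul_eq_zero.mp h with h' | h'
      · exact absurd h' (hνpos x).ne'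
      · exact absurd h' hxy.ne'
    · exact h
  have := sub_eq_zero.mp (pow_eq_zero_iff (two_ne_zero) |>.mp hsq)
  exact this.symm
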